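/- For every d ≥ 1 and every multi-index α ∈ ℕ^d, one has U_α(X) = − V_α'(X) for all X ≥ 0, where V_α' is the derivative of V_α. -/

import Mathlib

open MeasureTheory
open intervalIntegral

noncomputable section

/-- The `n`-th Laguerre polynomial `L_n(x) = Σ_{k=0}^n (n choose k) (−x)^k / k!`. -/
def laguerreFun (n : ℕ) (x : ℝ) : ℝ :=
  ∑ k ∈ Finset.range (n + 1), (n.choose k : ℝ) * (-x) ^ k / (k.factorial : ℝ)

/-- `T_n(X) = Σ_{k=0}^{n−1} (−1)^k L_k(X) + ((−1)^n/2) L_n(X)`. -/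
def Tfun (n : ℕ) (X : ℝ) : ℝ :=
  (∑ k ∈ Finset.range n, (-1 : ℝ) ^ k * laguerreFun k X) +
    (-1 : ℝ) ^ n / 2 * laguerreFun n X

/-- `V_α(X) = 4 e^{−X/2} Σ_{k=0}^{d−1} C(d−1,k) T_{|α|+k}(X)`. -/
def Vfun (d : ℕ) (α : Fin d → ℕ) (X : ℝ) : ℝ :=
  4 * Real.exp (-X / 2) *
    ∑ k ∈ Finset.range d, ((d - 1).choose k : ℝ) * Tfun ((∑ j, α j) + k) X

/-- `U_α(X) = (−1)^{|α|} e^{−X/2} ∫_{Ω_d(X)} L_{α_d}(X − Σ t_j) ∏_{j<d-1} L_{α_j}(t_j) dt`,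
for a multi-index `α ∈ ℕ^{d+1}`, the integral being taken over the simplex
`{t ∈ ℝ^d : t_j ≥ 0, Σ t_j ≤ X}` (for `d = 0` it reduces to `(−1)^{|α|} e^{−X/2} L_{α_0}(X)`). -/
def Ufun (d : ℕ) (α : Fin (d + 1) → ℕ) (X : ℝ) : ℝ :=
  (-1 : ℝ) ^ (∑ j, α j) * Real.exp (-X / 2) *
    ∫ t in {t : Fin d → ℝ | (∀ j, 0 ≤ t j) ∧ (∑ j, t j) ≤ X},
      laguerreFun (α (Fin.last d)) (X - ∑ j, t j) *
        ∏ j : Fin d, laguerreFun (α j.castSucc) (t j)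

def lagD (n : ℕ) (x : ℝ) : ℝ :=
  -∑ k ∈ Finset.range n, (n.choose (k+1) : ℝ) * (-x) ^ k / (k.factorial : ℝ)

lemma continuous_laguerreFun (n : ℕ) : Continuous (laguerreFun n) := by
  unfold laguerreFun
  exact continuous_finset_sum _ fun k _ => by fun_prop

lemma hasDerivAt_laguerreFun (n : ℕ) (x : ℝ) :
    HasDerivAt (laguerreFun n) (lagD n x) x := by
  have h : ∀ k : ℕ, HasDerivAt (fun x : ℝ => ((n.choose k : ℝ) * (-x) ^ k / (k.factorial : ℝ)))
      ((n.choose k : ℝ) * ((k : ℝ) * (-x) ^ (k-1) * (-1)) / (k.factorial : ℝ)) x := by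
    intro k
    have h1 : HasDerivAt (fun x : ℝ => -x) (-1) x := (hasDerivAt_id x).neg
    have h2 := (h1.pow k)
    simpa [mul_div_assoc, mul_comm, mul_assoc, mul_left_comm] using
      ((h2.const_mul ((n.choose k : ℝ))).div_const (k.factorial : ℝ))
  have H := HasDerivAt.fun_sum (u := Finset.range (n+1))
    (A := fun k x => ((n.choose k : ℝ) * (-x) ^ k / (k.factorial : ℝ)))
    (A' := fun k => ((n.choose k : ℝ) * ((k : ℝ) * (-x) ^ (k-1) * (-1)) / (k.factorial : ℝ)))
    (fun k _ => h k)
  have : (∑ k ∈ Finset.range (n+1), ((n.choose k : ℝ) * ((k : ℝ) * (-x) ^ (k-1) * (-1)) / (k.factorial : ℝ)))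
      = lagD n x := by
    rw [Finset.sum_range_succ']
    simp only [Nat.cast_zero, pow_zero, mul_zero, zero_mul, mul_one, Nat.factorial_zero]
    rw [lagD, ← Finset.sum_neg_distrib]
    rw [show (0:ℝ)/(1:ℕ) = 0 by norm_num, add_zero]
    apply Finset.sum_congr rfl
    intro k _
    have hk : (k:ℕ)+1 - 1 = k := rfl
    rw [hk, Nat.factorial_succ]
    have : ((k:ℝ)+1) ≠ 0 := by positivity
    push_cast
    field_simp
  rw [← this]
  exact H







lemma lagD_succ (n : ℕ) (x : ℝ) : lagD (n+1) x = lagD n x - laguerreFun n x := by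
  unfold lagD laguerreFun
  have h1 : (∑ k ∈ Finset.range (n+1), ((n.choose (k+1) : ℝ)) * (-x) ^ k / (k.factorial : ℝ))
      = ∑ k ∈ Finset.range n, ((n.choose (k+1) : ℝ)) * (-x) ^ k / (k.factorial : ℝ) := by
    rw [Finset.sum_range_succ, Nat.choose_succ_self]
    norm_num
  have hA : (∑ k ∈ Finset.range (n+1), (((n+1).choose (k+1) : ℝ)) * (-x) ^ k / (k.factorial : ℝ))
      = (∑ k ∈ Finset.range (n+1), ((n.choose (k+1) : ℝ)) * (-x) ^ k / (k.factorial : ℝ))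
        + ∑ k ∈ Finset.range (n+1), ((n.choose k : ℝ)) * (-x) ^ k / (k.factorial : ℝ) := by
    rw [← Finset.sum_add_distrib]
    apply Finset.sum_congr rfl
    intro k _
    rw [Nat.choose_succ_succ]
    push_cast
    ring
  linarith [hA, h1]

lemma hasDerivAt_expT (n : ℕ) (X : ℝ) :
    HasDerivAt (fun Y => Real.exp (-Y/2) * Tfun n Y)
      (-(1/4) * (-1)^n * (Real.exp (-X/2) * laguerreFun n X)) X := by
  have hexp : HasDerivAt (fun Y : ℝ => Real.exp (-Y/2)) (-(1/2) * Real.exp (-X/2)) X := by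
    have h1 : HasDerivAt (fun Y : ℝ => -Y/2) (-(1/2)) X := by
      have := ((hasDerivAt_id X).neg.div_const 2)
      norm_num at this ⊢
      exact this
    simpa [mul_comm] using h1.exp
  induction n with
  | zero =>
      have hL : ∀ Y : ℝ, Tfun 0 Y = 1/2 := by
        intro Y; simp [Tfun, laguerreFun]
      have h2 : HasDerivAt (fun Y : ℝ => Real.exp (-Y/2) * (1/2 : ℝ))
          ((-(1/2) * Real.exp (-X/2)) * (1/2)) X := hexp.mul_const _
      have he : (fun Y : ℝ => Real.exp (-Y/2) * Tfun 0 Y)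
          = fun Y : ℝ => Real.exp (-Y/2) * (1/2 : ℝ) := by
        funext Y; rw [hL]
      rw [he]
      convert h2 using 1
      simp [laguerreFun]
      ring
  | succ n ih =>
      have hT : ∀ Y : ℝ, Tfun (n+1) Y = Tfun n Y
          + (-1:ℝ)^n/2 * (laguerreFun n Y - laguerreFun (n+1) Y) := by
        intro Y
        simp only [Tfun, Finset.sum_range_succ, pow_succ]
        ring
      have he : (fun Y : ℝ => Real.exp (-Y/2) * Tfun (n+1) Y)
          = fun Y : ℝ => Real.exp (-Y/2) * Tfun n Y
            + (-1:ℝ)^n/2 * (Real.exp (-Y/2) * (laguerreFun n Y - laguerreFun (n+1) Y)) := by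
        funext Y; rw [hT]; ring
      rw [he]
      have hH : HasDerivAt (fun Y : ℝ => Real.exp (-Y/2) * (laguerreFun n Y - laguerreFun (n+1) Y))
          ((-(1/2) * Real.exp (-X/2)) * (laguerreFun n X - laguerreFun (n+1) X)
            + Real.exp (-X/2) * (lagD n X - lagD (n+1) X)) X :=
        hexp.mul ((hasDerivAt_laguerreFun n X).sub (hasDerivAt_laguerreFun (n+1) X))
      have := ih.add (hH.const_mul ((-1:ℝ)^n/2))
      refine this.congr_deriv ?_
      rw [lagD_succ]
      ring_nf

lemma beta_int : ∀ (b a : ℕ) (X : ℝ),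
    ∫ s in (0:ℝ)..X, s^a * (X - s)^b
      = ((a.factorial : ℝ) * b.factorial / ((a+b+1).factorial)) * X^(a+b+1) := by
  intro b
  induction b with
  | zero =>
      intro a X
      simp only [pow_zero, mul_one, Nat.factorial_zero, Nat.add_zero]
      rw [integral_pow]
      have h : ((a+0+1).factorial : ℝ) = (a+1) * a.factorial := by
        simp [Nat.factorial_succ]
      rw [h]
      have h1 : (a.factorial : ℝ) ≠ 0 := by positivity
      have h2 : ((a:ℝ)+1) ≠ 0 := by positivity
      field_simp
      ring
  | succ b ih =>
      intro a X
      have hu : ∀ x ∈ Set.uIcc (0:ℝ) X, HasDerivAt (fun s : ℝ => (X - s)^(b+1))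
          (((b:ℝ)+1) * (X - x)^b * (-1)) x := by
        intro x _
        exact (((hasDerivAt_id x).const_sub X).pow (b+1)).congr_deriv (by simp only [id_eq]; push_cast; ring)
      have hv : ∀ x ∈ Set.uIcc (0:ℝ) X, HasDerivAt (fun s : ℝ => s^(a+1)/((a:ℝ)+1))
          (x^a) x := by
        intro x _
        have := (hasDerivAt_pow (a+1) x).div_const ((a:ℝ)+1)
        have h2 : ((a:ℝ)+1) ≠ 0 := by positivity
        refine this.congr_deriv ?_
        push_cast
        field_simp
      have hiu : IntervalIntegrable (fun x : ℝ => ((b:ℝ)+1) * (X - x)^b * (-1)) volume 0 X :=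
        (by fun_prop : Continuous fun x : ℝ => ((b:ℝ)+1) * (X - x)^b * (-1)).intervalIntegrable _ _
      have hiv : IntervalIntegrable (fun x : ℝ => x^a) volume 0 X :=
        (by fun_prop : Continuous fun x : ℝ => x^a).intervalIntegrable _ _
      have H := integral_mul_deriv_eq_deriv_mul hu hv hiu hiv
      have hL : (∫ s in (0:ℝ)..X, s^a * (X - s)^(b+1))
          = ∫ x in (0:ℝ)..X, (X - x)^(b+1) * x^a := by
        apply integral_congr; intro x _; ring
      rw [hL, H]
      have hR : (∫ x in (0:ℝ)..X, (((b:ℝ)+1) * (X - x)^b * (-1)) * (x^(a+1)/((a:ℝ)+1)))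
          = (-(((b:ℝ)+1)/((a:ℝ)+1))) * ∫ x in (0:ℝ)..X, x^(a+1) * (X - x)^b := by
        rw [← intervalIntegral.integral_const_mul]
        apply integral_congr; intro x _
        have h2 : ((a:ℝ)+1) ≠ 0 := by positivity
        field_simp
      rw [hR, ih (a+1) X]
      have e1 : (X - X)^(b+1) = 0 := by simp
      have e2 : (0:ℝ)^(a+1)/((a:ℝ)+1) = 0 := by simp
      rw [e1, e2]
      have h2 : ((a:ℝ)+1) ≠ 0 := by positivity
      have hf1 : ((a+1+b+1).factorial : ℝ) ≠ 0 := by positivity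
      have hf2 : ((a+(b+1)+1).factorial : ℝ) ≠ 0 := by positivity
      have hkey : ((a+(b+1)+1).factorial : ℝ) = (a+1+b+1).factorial := by
        norm_num; ring_nf
      have hfac1 : ((a+1).factorial : ℝ) = ((a:ℝ)+1) * a.factorial := by
        simp [Nat.factorial_succ]
      have hfac2 : (((b+1)).factorial : ℝ) = ((b:ℝ)+1) * b.factorial := by
        simp [Nat.factorial_succ]
      have hpow : X^(a+1+b+1) = X^(a+(b+1)+1) := by ring_nf
      rw [hkey, hfac1, hfac2, hpow]
      field_simp
      ring



lemma regroup (m n : ℕ) (F : ℕ × ℕ → ℝ) (hF : ∀ p : ℕ × ℕ, m < p.1 ∨ n < p.2 → F p = 0) :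
    ∑ p ∈ Finset.range (m+1) ×ˢ Finset.range (n+1), F p
      = ∑ j ∈ Finset.range (m+n+1), ∑ p ∈ Finset.HasAntidiagonal.antidiagonal j, F p := by
  have hdisj : (↑(Finset.range (m+n+1)) : Set ℕ).PairwiseDisjoint Finset.HasAntidiagonal.antidiagonal := by
    intro i _ j _ hij
    apply Finset.disjoint_left.mpr
    intro p hpi hpj
    exact hij ((Finset.HasAntidiagonal.mem_antidiagonal.mp hpi).symm.trans (Finset.HasAntidiagonal.mem_antidiagonal.mp hpj))
  rw [← Finset.sum_biUnion hdisj]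
  apply Finset.sum_subset
  · intro p hp
    rw [Finset.mem_product, Finset.mem_range, Finset.mem_range] at hp
    rw [Finset.mem_biUnion]
    exact ⟨p.1 + p.2, Finset.mem_range.mpr (by omega), Finset.HasAntidiagonal.mem_antidiagonal.mpr rfl⟩
  · intro p _ hp
    apply hF
    rw [Finset.mem_product, Finset.mem_range, Finset.mem_range] at hp
    omega

lemma lag_conv (m n : ℕ) (X : ℝ) :
    ∫ s in (0:ℝ)..X, laguerreFun m s * laguerreFun n (X - s)
      = laguerreFun (m+n) X - laguerreFun (m+n+1) X := by
  -- expand integrand as a double sum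
  have hexp : ∀ s : ℝ, laguerreFun m s * laguerreFun n (X - s)
      = ∑ p ∈ Finset.range (m+1) ×ˢ Finset.range (n+1),
          ((m.choose p.1 : ℝ) * (n.choose p.2) * (-1)^(p.1+p.2) / (p.1.factorial * p.2.factorial))
            * (s ^ p.1 * (X - s) ^ p.2) := by
    intro s
    rw [Finset.sum_product]
    unfold laguerreFun
    rw [Finset.sum_mul_sum]
    apply Finset.sum_congr rfl; intro a _
    apply Finset.sum_congr rfl; intro b _
    rw [neg_pow s, neg_pow (X - s), pow_add]
    field_simp
  have hcont : ∀ p : ℕ × ℕ, Continuous (fun s : ℝ =>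
      ((m.choose p.1 : ℝ) * (n.choose p.2) * (-1)^(p.1+p.2) / (p.1.factorial * p.2.factorial))
        * (s ^ p.1 * (X - s) ^ p.2)) := by
    intro p; fun_prop
  calc ∫ s in (0:ℝ)..X, laguerreFun m s * laguerreFun n (X - s)
      = ∫ s in (0:ℝ)..X, ∑ p ∈ Finset.range (m+1) ×ˢ Finset.range (n+1),
          ((m.choose p.1 : ℝ) * (n.choose p.2) * (-1)^(p.1+p.2) / (p.1.factorial * p.2.factorial))
            * (s ^ p.1 * (X - s) ^ p.2) := by
        apply integral_congr; intro s _; exact hexp s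
    _ = ∑ p ∈ Finset.range (m+1) ×ˢ Finset.range (n+1),
          ∫ s in (0:ℝ)..X,
            ((m.choose p.1 : ℝ) * (n.choose p.2) * (-1)^(p.1+p.2) / (p.1.factorial * p.2.factorial))
              * (s ^ p.1 * (X - s) ^ p.2) := by
        apply intervalIntegral.integral_finset_sum
        intro p _
        exact (hcont p).intervalIntegrable _ _
    _ = ∑ p ∈ Finset.range (m+1) ×ˢ Finset.range (n+1),
          ((m.choose p.1 : ℝ) * (n.choose p.2)) * ((-1)^(p.1+p.2) * X^(p.1+p.2+1)
            / ((p.1+p.2+1).factorial)) := by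
        apply Finset.sum_congr rfl; intro p _
        rw [intervalIntegral.integral_const_mul, beta_int]
        have h1 : (p.1.factorial : ℝ) ≠ 0 := by positivity
        have h2 : (p.2.factorial : ℝ) ≠ 0 := by positivity
        have h3 : ((p.1+p.2+1).factorial : ℝ) ≠ 0 := by positivity
        field_simp
    _ = ∑ j ∈ Finset.range (m+n+1), ∑ p ∈ Finset.HasAntidiagonal.antidiagonal j,
          ((m.choose p.1 : ℝ) * (n.choose p.2)) * ((-1)^(p.1+p.2) * X^(p.1+p.2+1)
            / ((p.1+p.2+1).factorial)) := by
        apply regroup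
        intro p hp
        have : (m.choose p.1) * (n.choose p.2) = 0 := by
          rcases hp with h | h
          · rw [Nat.choose_eq_zero_of_lt h]; ring
          · rw [Nat.choose_eq_zero_of_lt h]; ring
        rw [show ((m.choose p.1 : ℝ) * (n.choose p.2)) = (((m.choose p.1) * (n.choose p.2) : ℕ) : ℝ) by push_cast; ring, this]
        simp
    _ = ∑ j ∈ Finset.range (m+n+1),
          (((m+n).choose j : ℝ)) * ((-1)^j * X^(j+1) / ((j+1).factorial)) := by
        apply Finset.sum_congr rfl; intro j _
        rw [show (((m+n).choose j : ℝ)) = ((∑ p ∈ Finset.HasAntidiagonal.antidiagonal j, (m.choose p.1) * (n.choose p.2) : ℕ) : ℝ) by rw [← Nat.add_choose_eq]]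
        push_cast
        rw [Finset.sum_mul]
        apply Finset.sum_congr rfl; intro p hp
        rw [Finset.HasAntidiagonal.mem_antidiagonal.mp hp]
    _ = laguerreFun (m+n) X - laguerreFun (m+n+1) X := by
        unfold laguerreFun
        have hm : (∑ k ∈ Finset.range (m+n+1), ((m+n).choose k : ℝ) * (-X) ^ k / (k.factorial : ℝ))
            = ∑ k ∈ Finset.range (m+n+2), ((m+n).choose k : ℝ) * (-X) ^ k / (k.factorial : ℝ) := by
          rw [Finset.sum_range_succ (n := m+n+1), Nat.choose_succ_self]
          norm_num
        rw [hm, ← Finset.sum_sub_distrib]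
        conv_rhs => rw [Finset.sum_range_succ']
        have h0 : (((m+n).choose 0 : ℝ) * (-X) ^ 0 / ((0:ℕ).factorial : ℝ))
            - (((m+n+1).choose 0 : ℝ) * (-X) ^ 0 / ((0:ℕ).factorial : ℝ)) = 0 := by
          simp
        rw [h0, add_zero]
        apply Finset.sum_congr rfl; intro j _
        have hps : ((m+n+1).choose (j+1) : ℝ) = (m+n).choose j + (m+n).choose (j+1) := by
          rw [Nat.choose_succ_succ]; push_cast; ring
        rw [hps]
        rw [show (-X)^(j+1) = -((-1)^j * X^(j+1)) by rw [neg_pow, pow_succ]; ring]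
        rw [Nat.factorial_succ]
        have h3 : ((j+1).factorial : ℝ) ≠ 0 := by positivity
        have h4 : (j.factorial : ℝ) ≠ 0 := by positivity
        push_cast
        field_simp
        ring
lemma pascal_resum (d N : ℕ) (X : ℝ) :
    ∑ k ∈ Finset.range (d+1), (d.choose k : ℝ)*(-1)^k * (laguerreFun (N+k) X - laguerreFun (N+k+1) X)
    = ∑ k ∈ Finset.range (d+2), ((d+1).choose k : ℝ)*(-1)^k * laguerreFun (N+k) X := by
  have hL : ∑ k ∈ Finset.range (d+1), (d.choose k : ℝ)*(-1)^k * (laguerreFun (N+k) X - laguerreFun (N+k+1) X)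
      = (∑ k ∈ Finset.range (d+1), (d.choose k : ℝ)*(-1)^k * laguerreFun (N+k) X)
        - ∑ k ∈ Finset.range (d+1), (d.choose k : ℝ)*(-1)^k * laguerreFun (N+k+1) X := by
    rw [← Finset.sum_sub_distrib]
    apply Finset.sum_congr rfl; intro k _; ring
  have hA : (∑ k ∈ Finset.range (d+1), (d.choose k : ℝ)*(-1)^k * laguerreFun (N+k) X)
      = laguerreFun (N+0) X
        + ∑ k ∈ Finset.range (d+1), (d.choose (k+1) : ℝ)*(-1)^(k+1) * laguerreFun (N+k+1) X := by
    rw [Finset.sum_range_succ']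
    have hz : (∑ k ∈ Finset.range (d+1), (d.choose (k+1) : ℝ)*(-1)^(k+1) * laguerreFun (N+k+1) X)
        = ∑ k ∈ Finset.range d, (d.choose (k+1) : ℝ)*(-1)^(k+1) * laguerreFun (N+k+1) X := by
      rw [Finset.sum_range_succ, Nat.choose_succ_self]
      norm_num [add_assoc]
    rw [hz]
    simp only [Nat.choose_zero_right, Nat.cast_one, pow_zero]
    rw [add_comm]
    norm_num [add_assoc]
  have hB : ∑ k ∈ Finset.range (d+2), ((d+1).choose k : ℝ)*(-1)^k * laguerreFun (N+k) X
      = laguerreFun (N+0) X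
        + ∑ k ∈ Finset.range (d+1), ((d+1).choose (k+1) : ℝ)*(-1)^(k+1) * laguerreFun (N+k+1) X := by
    rw [Finset.sum_range_succ']
    simp only [Nat.choose_zero_right, Nat.cast_one, pow_zero]
    rw [add_comm]
    norm_num [add_assoc]
  rw [hL, hA, hB]
  have : ∑ k ∈ Finset.range (d+1), ((d+1).choose (k+1) : ℝ)*(-1)^(k+1) * laguerreFun (N+k+1) X
      = (∑ k ∈ Finset.range (d+1), (d.choose (k+1) : ℝ)*(-1)^(k+1) * laguerreFun (N+k+1) X)
        - ∑ k ∈ Finset.range (d+1), (d.choose k : ℝ)*(-1)^k * laguerreFun (N+k+1) X := by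
    rw [← Finset.sum_sub_distrib]
    apply Finset.sum_congr rfl; intro k _
    rw [Nat.choose_succ_succ]
    push_cast
    ring
  rw [this]
  ring



def simplexSet (d : ℕ) (X : ℝ) : Set (Fin d → ℝ) :=
  {t | (∀ j, 0 ≤ t j) ∧ (∑ j, t j) ≤ X}

lemma isClosed_simplexSet (d : ℕ) (X : ℝ) : IsClosed (simplexSet d X) := by
  have h1 : IsClosed {t : Fin d → ℝ | ∀ j, 0 ≤ t j} := by
    have : {t : Fin d → ℝ | ∀ j, 0 ≤ t j} = ⋂ j, {t | 0 ≤ t j} := by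
      ext t; simp
    rw [this]
    exact isClosed_iInter fun j => isClosed_le continuous_const (continuous_apply j)
  have h2 : IsClosed {t : Fin d → ℝ | (∑ j, t j) ≤ X} :=
    isClosed_le (by fun_prop) continuous_const
  exact (h1.inter h2)

lemma isCompact_simplexSet (d : ℕ) (X : ℝ) : IsCompact (simplexSet d X) := by
  refine IsCompact.of_isClosed_subset (isCompact_Icc (a := (0 : Fin d → ℝ)) (b := fun _ => X))
    (isClosed_simplexSet d X) ?_
  intro t ht
  constructor
  · intro j; exact ht.1 j
  · intro j
    calc t j ≤ ∑ i, t i := Finset.single_le_sum (fun i _ => ht.1 i) (Finset.mem_univ j)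
    _ ≤ X := ht.2

lemma integrableOn_simplex (d : ℕ) (X : ℝ) {f : (Fin d → ℝ) → ℝ} (hf : Continuous f) :
    IntegrableOn f (simplexSet d X) volume :=
  hf.continuousOn.integrableOn_compact (isCompact_simplexSet d X)

lemma simplex_int : ∀ (d : ℕ) (α : Fin (d+1) → ℕ) (X : ℝ), 0 ≤ X →
    (∫ t in simplexSet d X,
       laguerreFun (α (Fin.last d)) (X - ∑ j, t j) * ∏ j : Fin d, laguerreFun (α j.castSucc) (t j))
    = ∑ k ∈ Finset.range (d+1), ((d.choose k : ℝ)) * ((-1:ℝ))^k * laguerreFun ((∑ j, α j) + k) X := by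
  intro d
  induction d with
  | zero =>
      intro α X hX
      have hset : simplexSet 0 X = Set.univ := by
        ext t
        simp [simplexSet, hX]
      rw [hset, Measure.restrict_univ]
      simp only [Finset.univ_eq_empty, Finset.sum_empty, Finset.prod_empty, sub_zero, mul_one]
      rw [MeasureTheory.integral_const]
      have : (volume : Measure (Fin 0 → ℝ)).real Set.univ = 1 := by
        rw [volume_pi]
        simp [Measure.real, Measure.pi_univ]
      rw [this]
      simp [Fin.sum_univ_one]
  | succ d ih =>

      intro α X hX
      set β : Fin (d+1) → ℕ := fun j => α j.succ with hbeta
      have hS : MeasurableSet (simplexSet (d+1) X) := (isClosed_simplexSet _ _).measurableSet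
      have hSd : ∀ Y : ℝ, MeasurableSet (simplexSet d Y) :=
        fun Y => (isClosed_simplexSet _ _).measurableSet
      set f : (Fin (d+1) → ℝ) → ℝ := fun t =>
        laguerreFun (α (Fin.last (d+1))) (X - ∑ j, t j)
          * ∏ j : Fin (d+1), laguerreFun (α j.castSucc) (t j) with hfdef
      have hfc : Continuous f := by
        apply Continuous.mul
        · exact (continuous_laguerreFun _).comp (by fun_prop)
        · exact continuous_finset_prod _ fun j _ =>
            (continuous_laguerreFun _).comp (continuous_apply j)
      set g := (simplexSet (d+1) X).indicator f with hgdef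
      have hgint : Integrable g volume := (integrableOn_simplex _ _ hfc).integrable_indicator hS
      set e := MeasurableEquiv.piFinSuccAbove (fun _ : Fin (d+1) => ℝ) 0 with hedef
      have hesymm : ∀ p : ℝ × (Fin d → ℝ), e.symm p = Fin.cons p.1 p.2 := by
        intro p
        simp [hedef, MeasurableEquiv.piFinSuccAbove, Fin.insertNthEquiv, Fin.insertNth_zero']
      have hmp := volume_preserving_piFinSuccAbove (fun _ : Fin (d+1) => ℝ) 0
      set M := ∑ j, β j with hM
      set W : ℝ → ℝ := fun Y =>
        ∑ k ∈ Finset.range (d+1), (d.choose k : ℝ) * (-1:ℝ)^k * laguerreFun (M + k) Y with hW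
      set F : ℝ × (Fin d → ℝ) → ℝ := fun p =>
        (Set.Icc (0:ℝ) X).indicator (fun s =>
          laguerreFun (α 0) s *
            (simplexSet d (X - s)).indicator (fun u =>
              laguerreFun (β (Fin.last d)) ((X - s) - ∑ j, u j) *
                ∏ j : Fin d, laguerreFun (β j.castSucc) (u j)) p.2) p.1 with hF
      have hmem : ∀ (s : ℝ) (u : Fin d → ℝ),
          Fin.cons s u ∈ simplexSet (d+1) X ↔ ((0 ≤ s ∧ ∀ j, 0 ≤ u j) ∧ s + ∑ j, u j ≤ X) := by
        intro s u
        simp only [simplexSet, Set.mem_setOf_eq, Fin.forall_fin_succ, Fin.cons_zero,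
          Fin.cons_succ, Fin.sum_cons]
      have hfcons : ∀ (s : ℝ) (u : Fin d → ℝ), f (Fin.cons s u)
          = laguerreFun (α 0) s * (laguerreFun (β (Fin.last d)) ((X - s) - ∑ j, u j)
              * ∏ j : Fin d, laguerreFun (β j.castSucc) (u j)) := by
        intro s u
        have e1 : β (Fin.last d) = α (Fin.last (d+1)) := by
          rw [hbeta]; simp [Fin.succ_last]
        have e2 : ∀ j : Fin d, β j.castSucc = α (j.succ.castSucc) := by
          intro j
          rw [hbeta]
          simp only []
          rw [← Fin.succ_castSucc]
        simp only [hfdef, Fin.prod_univ_succ, Fin.cons_zero, Fin.cons_succ, Fin.sum_cons,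
          Fin.castSucc_zero]
        rw [show X - (s + ∑ j, u j) = (X - s) - ∑ j, u j from by ring, ← e1]
        have : ∀ j : Fin d, laguerreFun (α (j.succ.castSucc)) (u j)
            = laguerreFun (β j.castSucc) (u j) := fun j => by rw [e2]
        rw [Finset.prod_congr rfl (fun j _ => this j)]
        ring
      have hgF : ∀ p : ℝ × (Fin d → ℝ), g (e.symm p) = F p := by
        rintro ⟨s, u⟩
        rw [hesymm]
        simp only [hgdef, hF]
        by_cases hs : s ∈ Set.Icc (0:ℝ) X
        · by_cases hu : u ∈ simplexSet d (X - s)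
          · have hc : Fin.cons s u ∈ simplexSet (d+1) X :=
              (hmem s u).mpr ⟨⟨hs.1, hu.1⟩, by have := hu.2; linarith⟩
            rw [Set.indicator_of_mem hc, Set.indicator_of_mem hs, Set.indicator_of_mem hu, hfcons]
          · have hc : Fin.cons s u ∉ simplexSet (d+1) X := by
              intro hc
              rcases (hmem s u).mp hc with ⟨⟨_, h1⟩, h2⟩
              exact hu ⟨h1, by linarith⟩
            rw [Set.indicator_of_notMem hc, Set.indicator_of_mem hs,
              Set.indicator_of_notMem hu, mul_zero]
        · have hc : Fin.cons s u ∉ simplexSet (d+1) X := by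
            intro hc
            rcases (hmem s u).mp hc with ⟨⟨h0, h1⟩, h2⟩
            have hsum : 0 ≤ ∑ j, u j := Finset.sum_nonneg fun j _ => h1 j
            exact hs ⟨h0, by linarith⟩
          rw [Set.indicator_of_notMem hc, Set.indicator_of_notMem hs]
      have hFint : Integrable F (volume.prod volume) := by
        have h0 : Integrable (g ∘ e.symm) (volume.prod volume) := by
          rw [← Measure.volume_eq_prod]
          exact ((hmp.symm e).integrable_comp_emb
            (MeasurableEquiv.measurableEmbedding e.symm)).mpr hgint
        exact h0.congr (Filter.Eventually.of_forall fun p => hgF p)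
      have h1 : (∫ t in simplexSet (d+1) X, f t) = ∫ t, g t := (MeasureTheory.integral_indicator hS).symm
      have h2 : (∫ t, g t) = ∫ p : ℝ × (Fin d → ℝ), g (e.symm p) :=
        ((hmp.symm e).integral_comp' g).symm
      have h3 : (∫ p : ℝ × (Fin d → ℝ), g (e.symm p)) = ∫ s : ℝ, ∫ u : Fin d → ℝ, F (s, u) := by
        simp_rw [hgF]
        rw [Measure.volume_eq_prod ℝ (Fin d → ℝ), MeasureTheory.integral_prod F hFint]
      have hinner : ∀ s : ℝ, (∫ u : Fin d → ℝ, F (s, u))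
          = (Set.Icc (0:ℝ) X).indicator (fun s' => laguerreFun (α 0) s' * W (X - s')) s := by
        intro s
        by_cases hs : s ∈ Set.Icc (0:ℝ) X
        · simp only [hF, Set.indicator_of_mem hs]
          rw [MeasureTheory.integral_const_mul, MeasureTheory.integral_indicator (hSd (X - s)),
            ih β (X - s) (by simpa using sub_nonneg.mpr hs.2)]
        · simp only [hF, Set.indicator_of_notMem hs, MeasureTheory.integral_zero]
      have h4 : (∫ s : ℝ, ∫ u : Fin d → ℝ, F (s, u))
          = ∫ s in (0:ℝ)..X, laguerreFun (α 0) s * W (X - s) := by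
        simp_rw [hinner]
        rw [MeasureTheory.integral_indicator measurableSet_Icc, MeasureTheory.integral_Icc_eq_integral_Ioc,
          ← intervalIntegral.integral_of_le hX]
      have h5 : (∫ s in (0:ℝ)..X, laguerreFun (α 0) s * W (X - s))
          = ∑ k ∈ Finset.range (d+1), (d.choose k : ℝ)*(-1:ℝ)^k
              * (laguerreFun ((α 0 + M) + k) X - laguerreFun ((α 0 + M) + k + 1) X) := by
        have hpt : ∀ s ∈ Set.uIcc (0:ℝ) X, laguerreFun (α 0) s * W (X - s)
            = ∑ k ∈ Finset.range (d+1), (d.choose k : ℝ)*(-1:ℝ)^k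
                * (laguerreFun (α 0) s * laguerreFun (M + k) (X - s)) := by
          intro s _
          rw [hW, Finset.mul_sum]
          apply Finset.sum_congr rfl; intro k _; ring
        rw [intervalIntegral.integral_congr hpt, intervalIntegral.integral_finset_sum]
        · apply Finset.sum_congr rfl
          intro k _
          rw [intervalIntegral.integral_const_mul, lag_conv (α 0) (M + k) X, ← add_assoc]
        · intro k _
          apply Continuous.intervalIntegrable
          exact continuous_const.mul
            ((continuous_laguerreFun _).mul ((continuous_laguerreFun _).comp (by fun_prop)))
      have hNsum : (∑ j : Fin (d+1+1), α j) = α 0 + M := by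
        rw [hM, hbeta, Fin.sum_univ_succ]
      rw [h1, h2, h3, h4, h5, hNsum]
      exact pascal_resum d (α 0 + M) X


theorem U_eq_neg_deriv_V (d : ℕ) (α : Fin (d + 1) → ℕ) :
    ∀ X : ℝ, 0 ≤ X → Ufun d α X = -(deriv (Vfun (d + 1) α) X) := by
  intro X hX
  have hVeq : Vfun (d+1) α = fun Y => ∑ k ∈ Finset.range (d+1),
      (4 * (d.choose k : ℝ)) * (Real.exp (-Y/2) * Tfun ((∑ j, α j) + k) Y) := by
    funext Y
    rw [Vfun, Finset.mul_sum]
    apply Finset.sum_congr rfl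
    intro k _
    rw [show (d + 1 - 1) = d from by omega]
    ring
  have hder : HasDerivAt (Vfun (d+1) α)
      (∑ k ∈ Finset.range (d+1), (4 * (d.choose k : ℝ)) *
        (-(1/4) * (-1)^((∑ j, α j) + k) * (Real.exp (-X/2) * laguerreFun ((∑ j, α j) + k) X))) X := by
    rw [hVeq]
    exact HasDerivAt.fun_sum fun k _ => (hasDerivAt_expT ((∑ j, α j) + k) X).const_mul _
  rw [hder.deriv, Ufun]
  rw [show {t : Fin d → ℝ | (∀ j, 0 ≤ t j) ∧ (∑ j, t j) ≤ X} = simplexSet d X from rfl]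
  rw [simplex_int d α X hX, Finset.mul_sum, ← Finset.sum_neg_distrib]
  apply Finset.sum_congr rfl
  intro k _
  rw [pow_add]
  ring
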